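/- For all real numbers X ≥ 0 and Y ≥ 0, X^6 + Y^6 + 9·X^4·Y^2 + 9·X^2·Y^4 + 6·X^5·Y + 6·X·Y^5 + 18·X^3·Y^3 ≤ (25/4)·(X^2 + Y^2)^3, with equality if and only if X = Y. -/
import Mathlib

theorem sharp_sextic_inequality (X Y : ℝ) (hX : 0 ≤ X) (hY : 0 ≤ Y) :
    X^6 + Y^6 + 9*X^4*Y^2 + 9*X^2*Y^4 + 6*X^5*Y + 6*X*Y^5 + 18*X^3*Y^3
      ≤ (25/4) * (X^2 + Y^2)^3 ∧
    (X^6 + Y^6 + 9*X^4*Y^2 + 9*X^2*Y^4 + 6*X^5*Y + 6*X*Y^5 + 18*X^3*Y^3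
      = (25/4) * (X^2 + Y^2)^3 ↔ X = Y) := by
  constructor
  · nlinarith [sq_nonneg (X - Y), mul_nonneg hX hY, sq_nonneg X, sq_nonneg Y,
      mul_nonneg (mul_nonneg hX hX) (mul_nonneg hY hY),
      mul_nonneg (sq_nonneg (X - Y)) (mul_nonneg (mul_nonneg hX hX) (mul_nonneg hY hY)),
      mul_nonneg (sq_nonneg (X - Y)) (sq_nonneg (X + Y)),
      mul_nonneg (sq_nonneg (X - Y)) (sq_nonneg X),
      mul_nonneg (sq_nonneg (X - Y)) (sq_nonneg Y),
      mul_nonneg (mul_nonneg (sq_nonneg (X - Y)) hX) hY]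
  · constructor
    · intro h
      have h2 : (X - Y)^2 * (7*X^4 + 6*X^3*Y + 18*X^2*Y^2 + 6*X*Y^3 + 7*Y^4) = 0 := by
        linear_combination (-4/3 : ℝ) * h
      rcases mul_eq_zero.mp h2 with h3 | h3
      · have := pow_eq_zero_iff (n := 2) (by norm_num) |>.mp h3
        linarith [this]
      · have hx4 : X^4 = 0 := by
          nlinarith [mul_nonneg (mul_nonneg (mul_nonneg hX hX) hX) hY,
            mul_nonneg (mul_nonneg hX hX) (mul_nonneg hY hY),
            mul_nonneg (mul_nonneg (mul_nonneg hX hY) hY) hY,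
            pow_nonneg hX 4, pow_nonneg hY 4]
        have hy4 : Y^4 = 0 := by
          nlinarith [mul_nonneg (mul_nonneg (mul_nonneg hX hX) hX) hY,
            mul_nonneg (mul_nonneg hX hX) (mul_nonneg hY hY),
            mul_nonneg (mul_nonneg (mul_nonneg hX hY) hY) hY,
            pow_nonneg hX 4, pow_nonneg hY 4]
        have hx0 := pow_eq_zero_iff (n := 4) (by norm_num) |>.mp hx4
        have hy0 := pow_eq_zero_iff (n := 4) (by norm_num) |>.mp hy4
        rw [hx0, hy0]
    · intro h; subst h; ring
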